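/- Let n ≥ 1 and let b₁,…,bₙ be positive integers. Then the following identity holds in the field ℚ(Y) of rational functions: ∑_{I⊆{1,…,n}} M(n,I) ∏_{i∈I} Y^{b_i}/(1 − Y^{b_i}) = [∑_{w∈Sₙ} ∏_{j∈Des(w)} Y^{b_j}] / ∏_{i=1}^{n}(1 − Y^{b_i}), where for I = {i₁ < i₂ < ⋯ < i_l} the multinomial coefficient M(n,I) is binom(n, i_l)·binom(i_l, i_{l−1})⋯binom(i₂, i₁), and M(n,∅) = 1. -/

import Mathlib

open scoped BigOperators

/-- The values of `w ∈ Sₙ` as a function on `{0,…,n-1}` (0-based), extended by the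
identity outside this range. -/
def permVal {n : ℕ} (w : Equiv.Perm (Fin n)) (t : ℕ) : ℕ :=
  if h : t < n then (w ⟨t, h⟩ : ℕ) else t

/-- `Des(w) = {i ∈ {1,…,n-1} : w(i+1) < w(i)}`, the descent set of `w ∈ Sₙ`
(in 1-based positions). -/
def desP {n : ℕ} (w : Equiv.Perm (Fin n)) : Finset ℕ :=
  (Finset.Icc 1 (n - 1)).filter fun j => permVal w j < permVal w (j - 1)

/-- The multinomial coefficient `M(n, I) = binom(n, i_l)·binom(i_l, i_{l-1})⋯binom(i₂, i₁)`
for `I = {i₁ < i₂ < ⋯ < i_l}`, with `M(n, ∅) = 1`. -/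
def gaussM (n : ℕ) (I : Finset ℕ) : ℕ :=
  (List.zipWith Nat.choose ((I.sort (· ≤ ·)) ++ [n]).tail (I.sort (· ≤ ·))).prod

open Finset

-- basic lemmas about gaussM-style list products
def gl (a : ℕ) (L : List ℕ) : ℕ := (List.zipWith Nat.choose (L ++ [a]).tail L).prod


lemma gl_cons_cons (a x y : ℕ) (L : List ℕ) :
    gl a (x :: y :: L) = Nat.choose y x * gl a (y :: L) := by
  simp [gl, List.zipWith]

lemma gl_append (n m : ℕ) (L : List ℕ) : gl n (L ++ [m]) = n.choose m * gl m L := by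
  induction L with
  | nil => simp [gl]
  | cons x L ih =>
    cases L with
    | nil => simp [gl, Nat.mul_comm]
    | cons y L' =>
      show gl n (x :: y :: (L' ++ [m])) = n.choose m * gl m (x :: y :: L')
      rw [gl_cons_cons, gl_cons_cons]
      show y.choose x * gl n (y :: L' ++ [m]) = _
      rw [ih]
      ring

lemma gaussM_eq_gl (n : ℕ) (I : Finset ℕ) : gaussM n I = gl n (I.sort (· ≤ ·)) := rfl

lemma sort_insert_max {m : ℕ} {I : Finset ℕ} (h : ∀ i ∈ I, i < m) :
    (insert m I).sort (· ≤ ·) = I.sort (· ≤ ·) ++ [m] := by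
  have hm : m ∉ I := fun hmem => lt_irrefl m (h m hmem)
  haveI : IsAntisymm ℕ (· ≤ ·) := ⟨fun a b h1 h2 => le_antisymm h1 h2⟩
  refine (fun hp h1 h2 => List.Perm.eq_of_pairwise' (r := (· ≤ ·)) h1 h2 hp) ?_ ?_ ?_
  · apply Multiset.coe_eq_coe.mp
    have h2 : ((I.sort (· ≤ ·) ++ [m] : List ℕ) : Multiset ℕ)
        = (↑(I.sort (· ≤ ·)) + ({m} : Multiset ℕ)) := by
      rw [← Multiset.coe_singleton, Multiset.coe_add]
    rw [Finset.sort_eq, h2, Finset.sort_eq, Finset.insert_val,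
      Multiset.ndinsert_of_notMem hm, add_comm, Multiset.singleton_add]
  · exact Finset.pairwise_sort _ _
  · rw [List.pairwise_append]
    refine ⟨Finset.pairwise_sort _ _, List.pairwise_singleton _ m, ?_⟩
    intro a ha b hb
    rw [List.mem_singleton] at hb
    subst hb
    exact le_of_lt (h a ((Finset.mem_sort _).mp ha))

lemma gaussM_insert_max {n m : ℕ} {I : Finset ℕ} (h : ∀ i ∈ I, i < m) :
    gaussM n (insert m I) = n.choose m * gaussM m I := by
  rw [gaussM_eq_gl, gaussM_eq_gl, sort_insert_max h, gl_append]

lemma gaussM_empty (n : ℕ) : gaussM n ∅ = 1 := by simp [gaussM]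

lemma permVal_lt {n : ℕ} (w : Equiv.Perm (Fin n)) {t : ℕ} (h : t < n) :
    permVal w t = (w ⟨t, h⟩ : ℕ) := dif_pos h

lemma mem_desP {n : ℕ} {w : Equiv.Perm (Fin n)} {j : ℕ} :
    j ∈ desP w ↔ (1 ≤ j ∧ j ≤ n - 1) ∧ permVal w j < permVal w (j - 1) := by
  simp [desP, Finset.mem_Icc]

lemma desP_subset_Icc {n : ℕ} (w : Equiv.Perm (Fin n)) : desP w ⊆ Finset.Icc 1 (n-1) :=
  Finset.filter_subset _ _

-- chain lemma at ℕ level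
lemma chain_lt (v : ℕ → ℕ) (a n : ℕ) (h : ∀ j, a < j → j < n → v (j-1) < v j) :
    ∀ q p, a ≤ p → p < q → q < n → v p < v q := by
  intro q
  induction q using Nat.strong_induction_on with
  | _ q IH =>
    intro p hap hpq hqn
    rcases eq_or_lt_of_le (Nat.succ_le_of_lt hpq) with heq | hlt
    · have := h q (lt_of_le_of_lt hap hpq) hqn
      have hq1 : q - 1 = p := by omega
      rwa [hq1] at this
    · have h1 : v p < v (q-1) := IH (q-1) (by omega) p hap (by omega) (by omega)
      have h2 : v (q-1) < v q := by
        have := h q (by omega) hqn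
        exact this
      omega

-- no descents past position a implies strictly increasing there
lemma no_descent_chain {n : ℕ} {w : Equiv.Perm (Fin n)} {a : ℕ}
    (h : ∀ j ∈ desP w, j ≤ a) :
    ∀ q p, a ≤ p → p < q → q < n → permVal w p < permVal w q := by
  apply chain_lt
  intro j haj hjn
  have hj1 : j ∉ desP w := fun hmem => absurd (h j hmem) (by omega)
  rw [mem_desP] at hj1
  push_neg at hj1
  have hle : permVal w (j-1) ≤ permVal w j := by
    have := hj1 ⟨by omega, by omega⟩
    omega
  rcases lt_or_eq_of_le hle with h' | h'
  · exact h'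
  · exfalso
    rw [permVal_lt w (show j - 1 < n by omega), permVal_lt w hjn] at h'
    have : (⟨j-1, by omega⟩ : Fin n) = ⟨j, hjn⟩ := w.injective (Fin.ext h')
    have := Fin.mk.injEq (j-1) (by omega : j - 1 < n) j hjn ▸ this
    omega

def DSet (n : ℕ) (I : Finset ℕ) : Finset (Equiv.Perm (Fin n)) :=
  Finset.univ.filter (fun w => desP w ⊆ I)

lemma strictMono_of_bound {n : ℕ} {w : Equiv.Perm (Fin n)} {a : ℕ}
    (h : ∀ j ∈ desP w, j ≤ a) {p q : Fin n} (hap : a ≤ (p : ℕ)) (hpq : p < q) : w p < w q := by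
  have := no_descent_chain h q p hap hpq q.2
  rw [permVal_lt w p.2, permVal_lt w q.2] at this
  rw [Fin.lt_def]
  exact this

lemma desP_eq_empty_iff {n : ℕ} {w : Equiv.Perm (Fin n)} : desP w ⊆ ∅ ↔ w = 1 := by
  constructor
  · intro h
    have hsm : StrictMono (⇑w) := by
      intro p q hpq
      exact strictMono_of_bound (fun j hj => absurd (h hj) (Finset.notMem_empty j)) (Nat.zero_le _) hpq
    have hid : StrictMono (id : Fin n → Fin n) := strictMono_id
    have hc : (Finset.univ : Finset (Fin n)).card = n := by simp
    have h1 := Finset.orderEmbOfFin_unique hc (f := ⇑w) (fun x => Finset.mem_univ _) hsm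
    have h2 := Finset.orderEmbOfFin_unique hc (f := (id : Fin n → Fin n)) (fun x => Finset.mem_univ _) hid
    ext p : 1
    have : ⇑w = (id : Fin n → Fin n) := h1.trans h2.symm
    have hp := congrFun this p
    simp only [id_eq] at hp
    simp [hp]
  · rintro rfl
    intro j hj
    rw [mem_desP] at hj
    obtain ⟨⟨h1, h2⟩, h3⟩ := hj
    exfalso
    rw [permVal_lt _ (show j < n by omega), permVal_lt _ (show j - 1 < n by omega)] at h3
    simp at h3
    omega

section Block
variable {n m : ℕ}

lemma card_compl_eq (hmn : m ≤ n) {T : Finset (Fin n)} (hT : T.card = n - m) :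
    Tᶜ.card = m := by
  rw [Finset.card_compl, hT, Fintype.card_fin]; omega

def phiFun (hmn : m ≤ n) (T : Finset (Fin n)) (hT : T.card = n - m)
    (w' : Equiv.Perm (Fin m)) : Fin n → Fin n := fun p =>
  if h : (p : ℕ) < m then (Tᶜ.orderEmbOfFin (card_compl_eq hmn hT)) (w' ⟨p, h⟩)
  else (T.orderEmbOfFin hT) ⟨(p : ℕ) - m, by have := p.2; omega⟩

variable (hmn : m ≤ n) (T : Finset (Fin n)) (hT : T.card = n - m) (w' : Equiv.Perm (Fin m))

lemma phiFun_lt {p : Fin n} (h : (p : ℕ) < m) :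
    phiFun hmn T hT w' p = (Tᶜ.orderEmbOfFin (card_compl_eq hmn hT)) (w' ⟨p, h⟩) := dif_pos h

lemma phiFun_ge {p : Fin n} (h : ¬ (p : ℕ) < m) :
    phiFun hmn T hT w' p = (T.orderEmbOfFin hT) ⟨(p : ℕ) - m, by have := p.2; omega⟩ := dif_neg h

lemma phiFun_mem_compl {p : Fin n} (h : (p : ℕ) < m) : phiFun hmn T hT w' p ∈ Tᶜ := by
  rw [phiFun_lt hmn T hT w' h]; exact Finset.orderEmbOfFin_mem _ _ _

lemma phiFun_mem {p : Fin n} (h : ¬ (p : ℕ) < m) : phiFun hmn T hT w' p ∈ T := by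
  rw [phiFun_ge hmn T hT w' h]; exact Finset.orderEmbOfFin_mem _ _ _

lemma phiFun_injective : Function.Injective (phiFun hmn T hT w') := by
  intro p q hpq
  by_cases hp : (p : ℕ) < m <;> by_cases hq : (q : ℕ) < m
  · rw [phiFun_lt hmn T hT w' hp, phiFun_lt hmn T hT w' hq] at hpq
    have h1 := (Tᶜ.orderEmbOfFin (card_compl_eq hmn hT)).injective hpq
    have h2 := w'.injective h1
    have := congrArg Fin.val h2
    exact Fin.ext this
  · exfalso
    have h1 := phiFun_mem_compl hmn T hT w' hp
    have h2 := phiFun_mem hmn T hT w' hq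
    rw [hpq] at h1
    exact (Finset.mem_compl.mp h1) h2
  · exfalso
    have h1 := phiFun_mem hmn T hT w' hp
    have h2 := phiFun_mem_compl hmn T hT w' hq
    rw [hpq] at h1
    exact (Finset.mem_compl.mp h2) h1
  · rw [phiFun_ge hmn T hT w' hp, phiFun_ge hmn T hT w' hq] at hpq
    have h1 := (T.orderEmbOfFin hT).injective hpq
    have := congrArg Fin.val h1
    simp only at this
    have hp' := p.2
    have hq' := q.2
    exact Fin.ext (by omega)

noncomputable def phiPerm : Equiv.Perm (Fin n) :=
  Equiv.ofBijective _ (Finite.injective_iff_bijective.mp (phiFun_injective hmn T hT w'))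

lemma phiPerm_apply (p : Fin n) : phiPerm hmn T hT w' p = phiFun hmn T hT w' p := rfl

end Block

section Block2
variable {n m : ℕ} (hmn : m ≤ n) (T : Finset (Fin n)) (hT : T.card = n - m)
  (w' : Equiv.Perm (Fin m))

lemma desP_phiPerm_low {j : ℕ} (h1 : 1 ≤ j) (hjm : j < m) :
    (j ∈ desP (phiPerm hmn T hT w') ↔ j ∈ desP w') := by
  have hjn : j < n := lt_of_lt_of_le hjm hmn
  have hj1m : j - 1 < m := by omega
  have hj1n : j - 1 < n := by omega
  have e1 : permVal (phiPerm hmn T hT w') j =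
      ((Tᶜ.orderEmbOfFin (card_compl_eq hmn hT)) (w' ⟨j, hjm⟩) : ℕ) := by
    rw [permVal_lt _ hjn, phiPerm_apply, phiFun_lt hmn T hT w' hjm]
  have e2 : permVal (phiPerm hmn T hT w') (j-1) =
      ((Tᶜ.orderEmbOfFin (card_compl_eq hmn hT)) (w' ⟨j-1, hj1m⟩) : ℕ) := by
    rw [permVal_lt _ hj1n, phiPerm_apply, phiFun_lt hmn T hT w' hj1m]
  have e3 : permVal w' j = (w' ⟨j, hjm⟩ : ℕ) := permVal_lt _ hjm
  have e4 : permVal w' (j-1) = (w' ⟨j-1, hj1m⟩ : ℕ) := permVal_lt _ hj1m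
  simp only [mem_desP, e1, e2, e3, e4]
  constructor
  · rintro ⟨⟨a1, a2⟩, hlt⟩
    exact ⟨⟨a1, by omega⟩, (Tᶜ.orderEmbOfFin (card_compl_eq hmn hT)).lt_iff_lt.mp hlt⟩
  · rintro ⟨⟨a1, a2⟩, hlt⟩
    exact ⟨⟨a1, by omega⟩, (Tᶜ.orderEmbOfFin (card_compl_eq hmn hT)).lt_iff_lt.mpr hlt⟩

lemma desP_phiPerm_high {j : ℕ} (hjm : m < j) (hjn : j < n) :
    j ∉ desP (phiPerm hmn T hT w') := by
  intro hmem
  rw [mem_desP] at hmem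
  obtain ⟨⟨a1, a2⟩, hlt⟩ := hmem
  rw [permVal_lt _ hjn, permVal_lt _ (show j - 1 < n by omega),
    phiPerm_apply, phiPerm_apply,
    phiFun_ge hmn T hT w' (p := ⟨j, hjn⟩) (show ¬ ((j:ℕ) < m) by omega),
    phiFun_ge hmn T hT w' (p := ⟨j - 1, by omega⟩) (show ¬ ((j - 1 : ℕ) < m) by omega)] at hlt
  have h2 := (T.orderEmbOfFin hT).lt_iff_lt.mp hlt
  have hcon : j - m < j - 1 - m := h2
  omega

lemma desP_phiPerm_subset : desP (phiPerm hmn T hT w') ⊆ insert m (desP w') := by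
  intro j hj
  have hj2 := desP_subset_Icc _ hj
  rw [Finset.mem_Icc] at hj2
  rcases lt_trichotomy j m with h | h | h
  · exact Finset.mem_insert_of_mem ((desP_phiPerm_low hmn T hT w' hj2.1 h).mp hj)
  · rw [h]; exact Finset.mem_insert_self _ _
  · exact absurd hj (desP_phiPerm_high hmn T hT w' h (by omega))

lemma desP_phiPerm_superset : desP w' ⊆ desP (phiPerm hmn T hT w') := by
  intro j hj
  have hj2 := desP_subset_Icc _ hj
  rw [Finset.mem_Icc] at hj2
  have hm1 : 1 ≤ m := le_trans hj2.1 (le_trans hj2.2 (Nat.sub_le m 1))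
  have hjm : j < m := by omega
  exact (desP_phiPerm_low hmn T hT w' hj2.1 hjm).mpr hj

end Block2

section Tail
variable {n m : ℕ}

def tailIm (hmn : m ≤ n) (w : Equiv.Perm (Fin n)) : Finset (Fin n) :=
  (Finset.univ : Finset (Fin (n - m))).image
    (fun (k : Fin (n - m)) => w ⟨m + (k : ℕ), by have := k.2; omega⟩)

lemma tailIm_injective (hmn : m ≤ n) (w : Equiv.Perm (Fin n)) :
    Function.Injective (fun (k : Fin (n - m)) => w ⟨m + (k : ℕ), by have := k.2; omega⟩) := by
  intro k1 k2 h
  have := w.injective h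
  have := congrArg Fin.val this
  simp only [Fin.val_mk] at this
  exact Fin.ext (by omega)

lemma tailIm_card (hmn : m ≤ n) (w : Equiv.Perm (Fin n)) : (tailIm hmn w).card = n - m := by
  rw [tailIm, Finset.card_image_of_injective _ (tailIm_injective hmn w)]
  simp

lemma mem_tailIm (hmn : m ≤ n) (w : Equiv.Perm (Fin n)) (v : Fin n) :
    v ∈ tailIm hmn w ↔ ∃ k : Fin (n - m), w ⟨m + (k : ℕ), by have := k.2; omega⟩ = v := by
  simp [tailIm]

lemma tailIm_phiPerm (hmn : m ≤ n) (T : Finset (Fin n)) (hT : T.card = n - m)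
    (w' : Equiv.Perm (Fin m)) : tailIm hmn (phiPerm hmn T hT w') = T := by
  apply Finset.eq_of_subset_of_card_le
  · intro v hv
    rw [mem_tailIm] at hv
    obtain ⟨k, hk⟩ := hv
    rw [← hk, phiPerm_apply]
    exact phiFun_mem hmn T hT w' (by simp only [Fin.val_mk]; omega)
  · rw [hT, tailIm_card]

end Tail

section Fiber
variable {n m : ℕ}

lemma fiber_card (hm1 : 1 ≤ m) (hmn : m ≤ n) (I' : Finset ℕ) (hI' : ∀ i ∈ I', i < m)
    (T : Finset (Fin n)) (hT : T.card = n - m) :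
    ((DSet n (insert m I')).filter (fun w => tailIm hmn w = T)).card = (DSet m I').card := by
  symm
  apply Finset.card_nbij (i := phiPerm hmn T hT)
  · -- maps to
    intro w' hw'
    rw [Finset.mem_coe, DSet, Finset.mem_filter] at hw'
    rw [Finset.mem_coe, Finset.mem_filter]
    refine ⟨?_, tailIm_phiPerm hmn T hT w'⟩
    rw [DSet, Finset.mem_filter]
    refine ⟨Finset.mem_univ _, ?_⟩
    intro j hj
    have := desP_phiPerm_subset hmn T hT w' hj
    rw [Finset.mem_insert] at this
    rcases this with h | h
    · rw [h]; exact Finset.mem_insert_self _ _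
    · exact Finset.mem_insert_of_mem (hw'.2 h)
  · -- injective
    intro w1 hw1 w2 hw2 heq
    ext p
    have := congrFun (congrArg (fun (w : Equiv.Perm (Fin n)) => (w : Fin n → Fin n)) heq)
      ⟨(p : ℕ), lt_of_lt_of_le p.2 hmn⟩
    simp only [phiPerm_apply] at this
    rw [phiFun_lt hmn T hT w1 (by simpa using p.2), phiFun_lt hmn T hT w2 (by simpa using p.2)]
      at this
    have h1 := (Tᶜ.orderEmbOfFin (card_compl_eq hmn hT)).injective this
    have h2 : w1 ⟨(p : ℕ), p.2⟩ = w2 ⟨(p : ℕ), p.2⟩ := h1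
    rw [Fin.eta] at h2
    rw [h2]
  · -- surjective
    intro w hw
    rw [Finset.coe_filter] at hw
    obtain ⟨hw1, hw2⟩ := hw
    rw [DSet, Finset.mem_filter] at hw1
    -- positions < m land in Tᶜ
    have hmemc : ∀ p : Fin n, (p : ℕ) < m → w p ∈ Tᶜ := by
      intro p hp
      rw [Finset.mem_compl, ← hw2, mem_tailIm]
      rintro ⟨k, hk⟩
      have := w.injective hk
      have := congrArg Fin.val this
      simp only [Fin.val_mk] at this
      omega
    -- the pattern permutation
    have hbij : Function.Injective (fun (p : Fin m) =>
        (Tᶜ.orderIsoOfFin (card_compl_eq hmn hT)).symm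
          ⟨w ⟨(p : ℕ), lt_of_lt_of_le p.2 hmn⟩,
            hmemc ⟨(p : ℕ), lt_of_lt_of_le p.2 hmn⟩ p.2⟩) := by
      intro p1 p2 h
      have h1 := (Tᶜ.orderIsoOfFin (card_compl_eq hmn hT)).symm.injective h
      have h2 := congrArg Subtype.val h1
      simp only at h2
      have h3 := w.injective h2
      have := congrArg Fin.val h3
      simp only [Fin.val_mk] at this
      exact Fin.ext this
    set w' : Equiv.Perm (Fin m) :=
      Equiv.ofBijective _ (Finite.injective_iff_bijective.mp hbij) with hw'def
    have hphi : phiPerm hmn T hT w' = w := by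
      ext p
      rw [phiPerm_apply]
      by_cases hp : (p : ℕ) < m
      · rw [phiFun_lt hmn T hT w' hp]
        have : w' ⟨(p : ℕ), hp⟩ =
            (Tᶜ.orderIsoOfFin (card_compl_eq hmn hT)).symm
              ⟨w ⟨(p : ℕ), lt_of_lt_of_le hp hmn⟩,
                hmemc ⟨(p : ℕ), lt_of_lt_of_le hp hmn⟩ hp⟩ := rfl
        rw [this]
        rw [show ∀ x, Tᶜ.orderEmbOfFin (card_compl_eq hmn hT) x =
          ((Tᶜ.orderIsoOfFin (card_compl_eq hmn hT)) x : Fin n) from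
            fun x => (Finset.coe_orderIsoOfFin_apply _ _ _).symm]
        rw [OrderIso.apply_symm_apply]
      · rw [phiFun_ge hmn T hT w' hp]
        -- tail of w is monotone with image T
        have hdesb : ∀ j ∈ desP w, j ≤ m := by
          intro j hj
          have := hw1.2 hj
          rw [Finset.mem_insert] at this
          rcases this with h | h
          · omega
          · exact le_of_lt (hI' j h)
        have hsm : StrictMono (fun (k : Fin (n - m)) =>
            w ⟨m + (k : ℕ), by have := k.2; omega⟩) := by
          intro k1 k2 hk
          apply strictMono_of_bound hdesb
          · simp only [Fin.val_mk]; omega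
          · rw [Fin.lt_def]; simp only [Fin.val_mk]
            rw [Fin.lt_def] at hk; omega
        have hmem : ∀ k, (fun (k : Fin (n - m)) =>
            w ⟨m + (k : ℕ), by have := k.2; omega⟩) k ∈ T := by
          intro k
          rw [← hw2, mem_tailIm]
          exact ⟨k, rfl⟩
        have huniq := Finset.orderEmbOfFin_unique hT hmem hsm
        have := congrFun huniq ⟨(p : ℕ) - m, by have := p.2; omega⟩
        simp only at this
        rw [← this]
        have harg : (⟨m + ((p : ℕ) - m), by have := p.2; omega⟩ : Fin n) = p := by
          apply Fin.ext; simp only [Fin.val_mk]; omega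
        rw [harg]
    exact ⟨w', by
      rw [Finset.mem_coe, DSet, Finset.mem_filter]
      refine ⟨Finset.mem_univ _, ?_⟩
      intro j hj
      have h1 := desP_phiPerm_superset hmn T hT w' hj
      rw [hphi] at h1
      have h2 := hw1.2 h1
      rw [Finset.mem_insert] at h2
      rcases h2 with h | h
      · exfalso
        have := desP_subset_Icc _ hj
        rw [Finset.mem_Icc] at this
        omega
      · exact h, hphi⟩

end Fiber

lemma card_DSet_insert {n m : ℕ} (hm1 : 1 ≤ m) (hmn : m ≤ n) (I' : Finset ℕ)
    (hI' : ∀ i ∈ I', i < m) :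
    (DSet n (insert m I')).card = n.choose m * (DSet m I').card := by
  rw [Finset.card_eq_sum_card_fiberwise (f := tailIm hmn)
    (t := (Finset.univ : Finset (Fin n)).powersetCard (n - m))
    (fun w _ => by
      rw [Finset.mem_coe, Finset.mem_powersetCard]
      exact ⟨Finset.subset_univ _, tailIm_card hmn w⟩)]
  rw [Finset.sum_congr rfl (fun T hT => fiber_card hm1 hmn I' hI' T
    (by rw [Finset.mem_powersetCard] at hT; exact hT.2))]
  rw [Finset.sum_const, smul_eq_mul, Finset.card_powersetCard, Finset.card_univ,
    Fintype.card_fin, Nat.choose_symm hmn]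

theorem card_DSet_eq (I : Finset ℕ) : ∀ n : ℕ, (∀ i ∈ I, 1 ≤ i ∧ i ≤ n) →
    (DSet n I).card = gaussM n I := by
  induction I using Finset.strongInduction with
  | _ I IH =>
    intro n hI
    rcases I.eq_empty_or_nonempty with rfl | hne
    · rw [gaussM_empty]
      have : DSet n ∅ = {1} := by
        ext w
        simp only [DSet, Finset.mem_filter, Finset.mem_univ, true_and, Finset.mem_singleton]
        exact desP_eq_empty_iff
      rw [this, Finset.card_singleton]
    · set m := I.max' hne with hm
      have hmI : m ∈ I := I.max'_mem hne
      have hIm : ∀ i ∈ I.erase m, i < m := by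
        intro i hi
        rw [Finset.mem_erase] at hi
        exact lt_of_le_of_ne (I.le_max' i hi.2) hi.1
      have hins : insert m (I.erase m) = I := Finset.insert_erase hmI
      have hm1 : 1 ≤ m := (hI m hmI).1
      have hmn : m ≤ n := (hI m hmI).2
      rw [← hins, gaussM_insert_max hIm, card_DSet_insert hm1 hmn _ hIm,
        IH (I.erase m) (Finset.erase_ssubset hmI) m
          (fun i hi => ⟨(hI i (Finset.mem_of_mem_erase hi)).1, le_of_lt (hIm i hi)⟩)]

lemma filter_superset_eq {S D : Finset ℕ} (hD : D ⊆ S) :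
    S.powerset.filter (fun I => D ⊆ I) = (S \ D).powerset.image (fun J => D ∪ J) := by
  ext I
  simp only [Finset.mem_filter, Finset.mem_powerset, Finset.mem_image]
  constructor
  · rintro ⟨hIS, hDI⟩
    exact ⟨I \ D, Finset.sdiff_subset_sdiff hIS (le_refl D),
      (Finset.union_sdiff_of_subset hDI)⟩
  · rintro ⟨J, hJ, rfl⟩
    exact ⟨Finset.union_subset hD (le_trans hJ (Finset.sdiff_subset)),
      Finset.subset_union_left⟩

theorem stmt15 (n : ℕ) (hn : 1 ≤ n) (b : ℕ → ℕ)
    (hb : ∀ i ∈ Finset.Icc 1 n, 0 < b i) :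
    ∑ I ∈ (Finset.Icc 1 n).powerset,
        (gaussM n I : RatFunc ℚ) *
          ∏ i ∈ I, ((RatFunc.X : RatFunc ℚ) ^ b i / (1 - (RatFunc.X : RatFunc ℚ) ^ b i)) =
      (∑ w : Equiv.Perm (Fin n), ∏ j ∈ desP w, (RatFunc.X : RatFunc ℚ) ^ b j) /
        ∏ i ∈ Finset.Icc 1 n, (1 - (RatFunc.X : RatFunc ℚ) ^ b i) := by
  classical
  set S := Finset.Icc 1 n with hS
  set t : ℕ → RatFunc ℚ := fun i => (RatFunc.X : RatFunc ℚ) ^ b i /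
    (1 - (RatFunc.X : RatFunc ℚ) ^ b i) with ht
  have hnz : ∀ i ∈ S, (1 - (RatFunc.X : RatFunc ℚ) ^ b i) ≠ 0 := by
    intro i hi h
    rw [sub_eq_zero] at h
    have hX : (RatFunc.X : RatFunc ℚ) = algebraMap (Polynomial ℚ) _ Polynomial.X := rfl
    rw [hX, ← map_pow, ← map_one (algebraMap (Polynomial ℚ) (RatFunc ℚ))] at h
    have := RatFunc.algebraMap_injective ℚ h.symm
    have hd := congrArg Polynomial.natDegree this
    rw [Polynomial.natDegree_X_pow, Polynomial.natDegree_one] at hd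
    have := hb i hi
    omega
  have hDsub : ∀ w : Equiv.Perm (Fin n), desP w ⊆ S := fun w =>
    le_trans (desP_subset_Icc w) (Finset.Icc_subset_Icc_right (Nat.sub_le n 1))
  have hgm : ∀ I ∈ S.powerset, ((gaussM n I : RatFunc ℚ) * ∏ i ∈ I, t i)
      = ∑ w : Equiv.Perm (Fin n), (if desP w ⊆ I then ∏ i ∈ I, t i else 0) := by
    intro I hI
    rw [Finset.mem_powerset] at hI
    have hcard := card_DSet_eq I n (fun i hi => by
      have := hI hi; rw [hS, Finset.mem_Icc] at this; exact this)
    rw [← hcard, DSet, Finset.card_filter]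
    push_cast
    rw [Finset.sum_mul]
    exact Finset.sum_congr rfl (fun w _ => by rw [ite_mul, one_mul, zero_mul])
  have hinner : ∀ w : Equiv.Perm (Fin n),
      (∑ I ∈ S.powerset, if desP w ⊆ I then ∏ i ∈ I, t i else 0)
      = (∏ j ∈ desP w, (RatFunc.X : RatFunc ℚ) ^ b j) /
          ∏ i ∈ S, (1 - (RatFunc.X : RatFunc ℚ) ^ b i) := by
    intro w
    set D := desP w with hD
    rw [← Finset.sum_filter, filter_superset_eq (hDsub w)]
    rw [Finset.sum_image (by
      intro J1 h1 J2 h2 heq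
      rw [Finset.mem_coe, Finset.mem_powerset] at h1 h2
      have d1 : Disjoint D J1 :=
        (Finset.disjoint_of_subset_left h1 Finset.sdiff_disjoint).symm
      have d2 : Disjoint D J2 :=
        (Finset.disjoint_of_subset_left h2 Finset.sdiff_disjoint).symm
      calc J1 = (D ∪ J1) \ D := (Finset.union_sdiff_cancel_left d1).symm
        _ = (D ∪ J2) \ D := by exact congrArg (· \ D) heq
        _ = J2 := Finset.union_sdiff_cancel_left d2)]
    have step : (∑ J ∈ (S \ D).powerset, ∏ i ∈ D ∪ J, t i)
        = ∑ J ∈ (S \ D).powerset, ((∏ i ∈ D, t i) * ∏ i ∈ J, t i) := by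
      refine Finset.sum_congr rfl (fun J hJ => ?_)
      rw [Finset.mem_powerset] at hJ
      have d1 : Disjoint D J :=
        (Finset.disjoint_of_subset_left hJ Finset.sdiff_disjoint).symm
      rw [Finset.prod_union d1]
    rw [step, ← Finset.mul_sum]
    have hsum : (∑ J ∈ (S \ D).powerset, ∏ i ∈ J, t i)
        = ∏ i ∈ S \ D, (t i + 1) := by
      rw [Finset.prod_add]
      exact (Finset.sum_congr rfl (fun J hJ => by simp)).symm
    rw [hsum]
    have h1 : ∀ i ∈ S, t i + 1 = (1 - (RatFunc.X : RatFunc ℚ) ^ b i)⁻¹ := by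
      intro i hi
      rw [ht]
      simp only
      rw [div_add' _ _ _ (hnz i hi), inv_eq_one_div]
      congr 1
      ring
    have hc : (∏ i ∈ D, (1 - (RatFunc.X : RatFunc ℚ) ^ b i)) ≠ 0 :=
      Finset.prod_ne_zero_iff.mpr (fun i hi => hnz i (hDsub w hi))
    have hprod : (∏ i ∈ D, (1 - (RatFunc.X : RatFunc ℚ) ^ b i)) *
        (∏ i ∈ S \ D, (1 - (RatFunc.X : RatFunc ℚ) ^ b i)) =
        ∏ i ∈ S, (1 - (RatFunc.X : RatFunc ℚ) ^ b i) := by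
      rw [← Finset.prod_union Finset.disjoint_sdiff,
        Finset.union_sdiff_of_subset (hDsub w)]
    calc (∏ j ∈ D, t j) * ∏ i ∈ S \ D, (t i + 1)
        = ((∏ j ∈ D, (RatFunc.X : RatFunc ℚ) ^ b j) /
            ∏ i ∈ D, (1 - (RatFunc.X : RatFunc ℚ) ^ b i)) *
          (∏ i ∈ S \ D, (1 - (RatFunc.X : RatFunc ℚ) ^ b i))⁻¹ := by
          rw [Finset.prod_congr rfl (fun i hi =>
            h1 i (Finset.mem_sdiff.mp hi).1), Finset.prod_inv_distrib, ht]
          simp only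
          rw [Finset.prod_div_distrib]
      _ = (∏ j ∈ D, (RatFunc.X : RatFunc ℚ) ^ b j) /
            ∏ i ∈ S, (1 - (RatFunc.X : RatFunc ℚ) ^ b i) := by
          rw [div_eq_mul_inv, mul_assoc, ← mul_inv, hprod, ← div_eq_mul_inv]
  rw [Finset.sum_congr rfl hgm, Finset.sum_comm,
    Finset.sum_congr rfl (fun w _ => hinner w), ← Finset.sum_div]
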